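/- For the spider graph SP(s, r) with s ≥ r arms, each of length r, the burning number equals r + 1. Moreover, if s ≥ r + 2, then every optimal burning sequence of SP(s, r) must burn the central vertex first. -/

import Mathlib

/-- The set of burned vertices after `t` rounds, given fire sources `x`. -/
def burnedSet {V : Type*} (G : SimpleGraph V) {k : ℕ} (x : Fin k → V) : ℕ → Set V
  | 0 => ∅
  | t + 1 =>
      burnedSet G x t ∪ {v | ∃ u ∈ burnedSet G x t, G.Adj u v} ∪
        {v | ∃ h : t < k, v = x ⟨t, h⟩}

/-- `x` is a burning sequence: each source is unburned when chosen, and after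
round `k` every vertex is burned. -/
def IsBurningSeq {V : Type*} (G : SimpleGraph V) {k : ℕ} (x : Fin k → V) : Prop :=
  (∀ i : Fin k, x i ∉ burnedSet G x i) ∧ burnedSet G x k = Set.univ

/-- The burning number: the least length of a burning sequence. -/
noncomputable def burningNumber {V : Type*} (G : SimpleGraph V) : ℕ :=
  sInf {k | ∃ x : Fin k → V, IsBurningSeq G x}

/-- The spider graph `SP(s, r)`: a centre `none` together with `s` arms, each a
path of length `r`; vertex `some (a, p)` is the vertex of arm `a` at distance
`p + 1` from the centre. -/
def spiderSP (s r : ℕ) : SimpleGraph (Option (Fin s × Fin r)) :=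
  SimpleGraph.fromRel fun x y =>
    (x = none ∧ ∃ (a : Fin s) (h : 0 < r), y = some (a, ⟨0, h⟩)) ∨
    (∃ (a : Fin s) (p q : Fin r), x = some (a, p) ∧ y = some (a, q) ∧ (q : ℕ) = (p : ℕ) + 1)

def sd {s r : ℕ} : Option (Fin s × Fin r) → Option (Fin s × Fin r) → ℕ
  | none, none => 0
  | none, some (_, p) => (p : ℕ) + 1
  | some (_, p), none => (p : ℕ) + 1
  | some (a, p), some (b, q) =>
      if a = b then max (p:ℕ) (q:ℕ) - min (p:ℕ) (q:ℕ) else (p:ℕ) + (q:ℕ) + 2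

lemma sd_self {s r : ℕ} (u : Option (Fin s × Fin r)) : sd u u = 0 := by
  rcases u with _ | ⟨a, p⟩ <;> simp [sd]

lemma sd_same_arm {s r : ℕ} (a : Fin s) (p q : Fin r) :
    sd (some (a, p)) (some (a, q)) = max (p : ℕ) (q : ℕ) - min (p : ℕ) (q : ℕ) := by
  simp [sd]

lemma sd_diff_arm {s r : ℕ} {a b : Fin s} (h : ¬ a = b) (p q : Fin r) :
    sd (some (a, p)) (some (b, q)) = (p : ℕ) + (q : ℕ) + 2 := by
  simp [sd, h]

lemma sd_le_of_adj {s r : ℕ} (u v w : Option (Fin s × Fin r))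
    (h : (spiderSP s r).Adj v w) : sd u w ≤ sd u v + 1 := by
  rw [spiderSP, SimpleGraph.fromRel_adj] at h
  obtain ⟨-, h | h⟩ := h <;>
    rcases h with ⟨rfl, a, h0, rfl⟩ | ⟨a, p, q, rfl, rfl, hpq⟩ <;>
    rcases u with _ | ⟨c, t⟩ <;>
    simp only [sd] <;> (try split_ifs) <;> simp_all <;> omega

lemma burned_mono {V : Type*} (G : SimpleGraph V) {k : ℕ} (x : Fin k → V) {t t' : ℕ}
    (h : t ≤ t') : burnedSet G x t ⊆ burnedSet G x t' := by
  induction h with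
  | refl => exact subset_rfl
  | step h ih => exact fun v hv => Or.inl (Or.inl (ih hv))

lemma burned_sd {s r k : ℕ} (x : Fin k → Option (Fin s × Fin r)) :
    ∀ t, ∀ v ∈ burnedSet (spiderSP s r) x t,
      ∃ j : Fin k, (j : ℕ) < t ∧ sd (x j) v + (j : ℕ) + 1 ≤ t := by
  intro t
  induction t with
  | zero => intro v hv; simp [burnedSet] at hv
  | succ t ih =>
    intro v hv
    rcases hv with (hv | ⟨u, hu, hadj⟩) | ⟨ht, rfl⟩
    · obtain ⟨j, hj, hle⟩ := ih v hv
      exact ⟨j, by omega, by omega⟩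
    · obtain ⟨j, hj, hle⟩ := ih u hu
      have := sd_le_of_adj (x j) u v hadj
      exact ⟨j, by omega, by omega⟩
    · exact ⟨⟨t, ht⟩, by simp, by simp [sd_self]⟩

-- adjacency helpers
lemma adj_center {s r : ℕ} (a : Fin s) (h0 : 0 < r) :
    (spiderSP s r).Adj none (some (a, ⟨0, h0⟩)) := by
  rw [spiderSP, SimpleGraph.fromRel_adj]
  exact ⟨by simp, Or.inl (Or.inl ⟨rfl, a, h0, rfl⟩)⟩

lemma adj_step {s r : ℕ} (a : Fin s) (p q : Fin r) (h : (q : ℕ) = (p : ℕ) + 1) :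
    (spiderSP s r).Adj (some (a, p)) (some (a, q)) := by
  rw [spiderSP, SimpleGraph.fromRel_adj]
  refine ⟨?_, Or.inl (Or.inr ⟨a, p, q, rfl, rfl, h⟩)⟩
  intro heq
  have : p = q := by simpa using heq
  omega

def upseq (s r : ℕ) (hr : 1 ≤ r) (hsr : r ≤ s) : Fin (r + 1) → Option (Fin s × Fin r) :=
  fun i => if h : (i : ℕ) = 0 then none
    else some ((⟨(i : ℕ) - 1, by have := i.isLt; omega⟩ : Fin s), (⟨r - 1, by omega⟩ : Fin r))

lemma upseq_burning (s r : ℕ) (hr : 1 ≤ r) (hsr : r ≤ s) :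
    IsBurningSeq (spiderSP s r) (upseq s r hr hsr) := by
  have hnone : none ∈ burnedSet (spiderSP s r) (upseq s r hr hsr) 1 := by
    have h1 : (0 : ℕ) < r + 1 := Nat.succ_pos r
    exact Or.inr ⟨h1, by simp [upseq]⟩
  have harm : ∀ p : ℕ, ∀ hp : p < r, ∀ a : Fin s,
      some (a, ⟨p, hp⟩) ∈ burnedSet (spiderSP s r) (upseq s r hr hsr) (p + 2) := by
    intro p
    induction p with
    | zero =>
      intro hp a
      exact Or.inl (Or.inr ⟨none, hnone, adj_center a hp⟩)
    | succ p ih =>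
      intro hp a
      exact Or.inl (Or.inr ⟨some (a, ⟨p, by omega⟩), ih (by omega) a,
        adj_step a ⟨p, by omega⟩ ⟨p + 1, hp⟩ rfl⟩)
  constructor
  · intro i hi
    obtain ⟨j, hji, hle⟩ := burned_sd _ _ _ hi
    have hilt : (i : ℕ) < r + 1 := i.isLt
    have hipos : ¬ (i : ℕ) = 0 := by omega
    have hxi : upseq s r hr hsr i
        = some ((⟨(i : ℕ) - 1, by omega⟩ : Fin s), (⟨r - 1, by omega⟩ : Fin r)) := by
      simp [upseq, hipos]
    rcases Nat.eq_zero_or_pos (j : ℕ) with hj0 | hjpos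
    · have hxj : upseq s r hr hsr j = none := by simp [upseq, hj0]
      rw [hxj, hxi] at hle
      simp only [sd] at hle
      omega
    · have hxj : upseq s r hr hsr j
          = some ((⟨(j : ℕ) - 1, by have := j.isLt; omega⟩ : Fin s), (⟨r - 1, by omega⟩ : Fin r)) := by
        have hjne : ¬(j : ℕ) = 0 := by omega
        simp [upseq, hjne]
      rw [hxj, hxi] at hle
      simp only [sd] at hle
      split_ifs at hle with heq
      · simp only [Fin.mk.injEq] at heq
        omega
      · omega
  · apply Set.eq_univ_iff_forall.mpr
    intro v
    rcases v with _ | ⟨a, p⟩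
    · exact burned_mono _ _ (by omega) hnone
    · have h2 := harm (p : ℕ) p.isLt a
      exact burned_mono _ _ (show (p : ℕ) + 2 ≤ r + 1 by have := p.isLt; omega)
        (by simpa using h2)

lemma cover_on_arm {s r k : ℕ} (hr : 1 ≤ r) (x : Fin k → Option (Fin s × Fin r))
    (hk : k ≤ r) {a : Fin s} {j : Fin k}
    (h : sd (x j) (some (a, ⟨r - 1, by omega⟩)) + (j : ℕ) + 1 ≤ k) :
    ∃ p : Fin r, x j = some (a, p) := by
  rcases hxj : x j with _ | ⟨b, q⟩
  · exfalso; rw [hxj] at h; simp only [sd] at h; omega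
  · rw [hxj] at h
    by_cases hba : b = a
    · exact ⟨q, by rw [hba]⟩
    · exfalso
      rw [sd_diff_arm hba] at h
      simp only [Fin.val_mk] at h
      have := j.isLt
      omega

lemma spider_lower {s r : ℕ} (hr : 1 ≤ r) (hs : 3 ≤ s) (hsr : r ≤ s) (k : ℕ)
    (x : Fin k → Option (Fin s × Fin r))
    (hx : burnedSet (spiderSP s r) x k = Set.univ) : r + 1 ≤ k := by
  by_contra hlt
  have hk : k ≤ r := by omega
  have cov : ∀ a : Fin s,
      ∃ j : Fin k, sd (x j) (some (a, (⟨r - 1, by omega⟩ : Fin r))) + (j : ℕ) + 1 ≤ k := by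
    intro a
    have hmem : some (a, (⟨r - 1, by omega⟩ : Fin r)) ∈ burnedSet (spiderSP s r) x k := by
      rw [hx]; exact Set.mem_univ _
    obtain ⟨j, -, hle⟩ := burned_sd x k _ hmem
    exact ⟨j, hle⟩
  choose f hf using cov
  have harm : ∀ a, ∃ p : Fin r, x (f a) = some (a, p) := fun a => cover_on_arm hr x hk (hf a)
  choose g hg using harm
  have hinj : Function.Injective f := by
    intro a a' he
    have h2 : (some (a, g a) : Option (Fin s × Fin r)) = some (a', g a') := by
      rw [← hg a, he, hg a']
    simp only [Option.some.injEq, Prod.mk.injEq] at h2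
    exact h2.1
  have hcard : s ≤ k := by simpa using Fintype.card_le_of_injective f hinj
  have hks : k = s := by omega
  have hkr : k = r := by omega
  have hbij : Function.Bijective f :=
    (Fintype.bijective_iff_injective_and_card f).2 ⟨hinj, by simp [hks]⟩
  obtain ⟨a0, ha0⟩ := hbij.2 ⟨k - 1, by omega⟩
  have h0 := hf a0
  rw [hg a0, sd_same_arm] at h0
  simp only [Fin.val_mk] at h0
  have hfa0 : (f a0 : ℕ) = k - 1 := by rw [ha0]
  have hga0 : (g a0 : ℕ) = r - 1 := by have := (g a0).isLt; omega
  have hr2 : r - 2 < r := by omega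
  obtain ⟨j', -, hj'⟩ := burned_sd x k _
    (hx ▸ Set.mem_univ (some (a0, (⟨r - 2, hr2⟩ : Fin r))))
  obtain ⟨a', ha'⟩ := hbij.2 j'
  rw [← ha', hg a'] at hj'
  by_cases haa : a' = a0
  · subst haa
    rw [sd_same_arm] at hj'
    simp only [Fin.val_mk] at hj'
    have hfa' : (f a' : ℕ) = k - 1 := by rw [ha0]
    omega
  · rw [sd_diff_arm haa] at hj'
    simp only [Fin.val_mk] at hj'
    have := (f a').isLt
    have := (g a').isLt
    omega

/-- For `s ≥ r` the spider `SP(s,r)` has burning number `r + 1`; moreover if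
`s ≥ r + 2` then every optimal burning sequence starts at the centre. -/
theorem burningNumber_spiderSP (s r : ℕ) (hr : 1 ≤ r) (hs : 3 ≤ s) (hsr : r ≤ s) :
    burningNumber (spiderSP s r) = r + 1 ∧
      (r + 2 ≤ s → ∀ x : Fin (r + 1) → Option (Fin s × Fin r),
        IsBurningSeq (spiderSP s r) x → x 0 = none) := by
  constructor
  · have hmem : r + 1 ∈ {k | ∃ x : Fin k → Option (Fin s × Fin r), IsBurningSeq (spiderSP s r) x} :=
      ⟨upseq s r hr hsr, upseq_burning s r hr hsr⟩
    refine le_antisymm (Nat.sInf_le hmem) (le_csInf ⟨r + 1, hmem⟩ ?_)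
    rintro k ⟨x, hx⟩
    exact spider_lower hr hs hsr k x hx.2
  · intro hs2 x hx
    by_contra hx0
    rcases hc : x 0 with _ | ⟨a0, p0⟩
    · exact hx0 hc
    have cov : ∀ a : Fin s,
        ∃ j : Fin (r + 1),
          sd (x j) (some (a, (⟨r - 1, by omega⟩ : Fin r))) + (j : ℕ) + 1 ≤ r + 1 := by
      intro a
      have hmem : some (a, (⟨r - 1, by omega⟩ : Fin r))
          ∈ burnedSet (spiderSP s r) x (r + 1) := by
        rw [hx.2]; exact Set.mem_univ _
      obtain ⟨j, -, hle⟩ := burned_sd x (r + 1) _ hmem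
      exact ⟨j, hle⟩
    choose f hf using cov
    have harm : ∀ a, ∃ p : Fin r, x (f a) = some (a, p) := by
      intro a
      have h := hf a
      rcases hxj : x (f a) with _ | ⟨b, q⟩
      · exfalso
        rw [hxj] at h
        simp only [sd] at h
        have hfa0 : (f a : ℕ) = 0 := by omega
        have : f a = 0 := Fin.ext hfa0
        rw [this, hc] at hxj
        exact Option.some_ne_none _ hxj
      · rw [hxj] at h
        by_cases hba : b = a
        · exact ⟨q, by rw [hba]⟩
        · exfalso
          rw [sd_diff_arm hba] at h
          simp only [Fin.val_mk] at h
          have := (f a).isLt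
          omega
    choose g hg using harm
    have hinj : Function.Injective f := by
      intro a a' he
      have h2 : (some (a, g a) : Option (Fin s × Fin r)) = some (a', g a') := by
        rw [← hg a, he, hg a']
      simp only [Option.some.injEq, Prod.mk.injEq] at h2
      exact h2.1
    have hcard : s ≤ r + 1 := by simpa using Fintype.card_le_of_injective f hinj
    omega
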